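/- Let G be a finite C-group, let p and q be distinct primes, let Q be a Sylow q-subgroup of G that is normal in G, and let P be a Sylow p-subgroup of G whose conjugation action on Q is nontrivial (i.e., some element of P does not centralize Q). Then p does not divide the order of the commutator subgroup G' of G, q divides the order of G', and Q is contained in G'. -/

import Mathlib

open Subgroup
open scoped commutatorElement

private lemma conj_pow'' {G : Type*} [Group G] (v u : G) (t : ℕ) :
    (v⁻¹ * u * v) ^ t = v⁻¹ * u ^ t * v := by
  simpa using conj_pow (a := v⁻¹) (b := u) (i := t)

private lemma conj_zpow'' {G : Type*} [Group G] (v u : G) (t : ℤ) :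
    (v⁻¹ * u * v) ^ t = v⁻¹ * u ^ t * v := by
  cases t with
  | ofNat n => simpa using conj_pow'' v u n
  | negSucc n =>
      rw [zpow_negSucc, zpow_negSucc, conj_pow'' v u (n + 1)]
      simp [mul_assoc]

private lemma conj_pow_iter {G : Type*} [Group G] {x w : G} {m : ℕ}
    (h : x⁻¹ * w * x = w ^ m) (i : ℕ) : (x ^ i)⁻¹ * w * x ^ i = w ^ m ^ i := by
  induction i with
  | zero => simp
  | succ n ih =>
      have e : (x ^ (n+1))⁻¹ * w * x ^ (n+1) = x⁻¹ * ((x ^ n)⁻¹ * w * x ^ n) * x := by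
        rw [pow_succ]; group
      rw [e, ih, ← conj_pow'' x w (m ^ n), h, ← pow_mul, ← pow_succ']


/-- **Core units lemma**: if `m` has order prime to `q` mod `q^k` and `m ≡ 1 mod q`,
then `m ≡ 1 mod q^k`. -/
private lemma units_one_mod_prime {q k a m : ℕ} (hq : q.Prime) (ha : Nat.Coprime a q)
    (h1 : m ^ a ≡ 1 [MOD q ^ k]) (h2 : m ≡ 1 [MOD q]) : m ≡ 1 [MOD q ^ k] := by
  rcases Nat.eq_zero_or_pos k with rfl | hk
  · simpa using (Nat.modEq_one : m ≡ 1 [MOD 1])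
  haveI : Fact q.Prime := ⟨hq⟩
  haveI : NeZero (q ^ k) := ⟨pow_ne_zero k hq.pos.ne'⟩
  have h1' : ((m : ZMod (q ^ k))) ^ a = 1 := by
    have := (ZMod.natCast_eq_natCast_iff _ _ _).mpr h1
    push_cast at this; exact this
  have h2' : ((m : ZMod q)) = 1 := by
    have := (ZMod.natCast_eq_natCast_iff _ _ _).mpr h2
    push_cast at this; exact this
  have ha0 : a ≠ 0 := by
    rintro rfl
    exact hq.one_lt.ne' (by simpa using ha)
  have hu : IsUnit ((m : ZMod (q ^ k))) := IsUnit.of_pow_eq_one h1' ha0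
  have hupow : hu.unit ^ a = 1 := Units.ext (by push_cast [hu.unit_spec]; exact h1')
  have hdvd : q ∣ q ^ k := dvd_pow_self q hk.ne'
  set φ := ZMod.unitsMap hdvd with hφ
  have hker : hu.unit ∈ φ.ker := by
    rw [MonoidHom.mem_ker]
    apply Units.ext
    show ((φ hu.unit : ZMod q)) = 1
    rw [hφ, ZMod.unitsMap_def]
    simp only [Units.coe_map, MonoidHom.coe_coe, hu.unit_spec]
    rw [map_natCast]
    exact h2'
  have hord_a : orderOf hu.unit ∣ a := orderOf_dvd_of_pow_eq_one hupow
  -- cardinality of the kernel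
  have hsurj : Function.Surjective φ := ZMod.unitsMap_surjective hdvd
  have hcard1 : Nat.card (ZMod (q ^ k))ˣ = Nat.card (ZMod q)ˣ * Nat.card φ.ker := by
    rw [Subgroup.card_eq_card_quotient_mul_card_subgroup φ.ker]
    congr 1
    exact Nat.card_congr (QuotientGroup.quotientKerEquivOfSurjective φ hsurj).toEquiv
  have hcard2 : q ^ (k - 1) * (q - 1) = (q - 1) * Nat.card φ.ker := by
    have e1 : Nat.card (ZMod (q ^ k))ˣ = q ^ (k - 1) * (q - 1) := by
      rw [Nat.card_eq_fintype_card, ZMod.card_units_eq_totient, Nat.totient_prime_pow hq hk]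
    have e2 : Nat.card (ZMod q)ˣ = q - 1 := by
      rw [Nat.card_eq_fintype_card, ZMod.card_units_eq_totient, Nat.totient_prime hq]
    rw [← e1, hcard1, e2]
  have hcardker : Nat.card φ.ker = q ^ (k - 1) := by
    have hq1 : q - 1 ≠ 0 := by have := hq.one_lt; omega
    have := hcard2
    rw [mul_comm (q ^ (k-1)) (q-1)] at this
    exact (Nat.eq_of_mul_eq_mul_left (Nat.pos_of_ne_zero hq1) this).symm
  have hord_k : orderOf hu.unit ∣ q ^ (k - 1) := by
    rw [← hcardker]
    have := orderOf_dvd_natCard (⟨hu.unit, hker⟩ : φ.ker)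
    rwa [Subgroup.orderOf_mk] at this
  have : orderOf hu.unit ∣ 1 := by
    have hco : Nat.Coprime a (q ^ (k - 1)) := ha.pow_right _
    exact hco ▸ Nat.dvd_gcd hord_a hord_k
  have hu1 : ((m : ZMod (q ^ k))) = 1 := by
    have := orderOf_eq_one_iff.mp (Nat.dvd_one.mp this)
    rw [← hu.unit_spec, this, Units.val_one]
  have := (ZMod.natCast_eq_natCast_iff m 1 (q ^ k)).mp (by simpa using hu1)
  exact this

private lemma conj_dichotomy {G : Type*} [Group G] [Finite G] {q : ℕ} (hq : q.Prime)
    {Q : Subgroup G} (hQn : Q.Normal) (hcyc : IsCyclic ↥Q) (hpg : IsPGroup q ↥Q)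
    {g : G} {a : ℕ} (ha : Nat.Coprime a q) (hga : ∀ y ∈ Q, g ^ a * y = y * g ^ a) :
    (∀ y ∈ Q, g⁻¹ * y * g = y) ∨ (∀ y ∈ Q, ∃ z ∈ Q, z⁻¹ * (g⁻¹ * z * g) = y) := by
  haveI : Fact q.Prime := ⟨hq⟩
  obtain ⟨c, hc⟩ := hcyc.exists_generator
  set cg : G := (c : G) with hcg
  have hmem : ∀ y ∈ Q, ∃ t : ℕ, cg ^ t = y := by
    intro y hy
    obtain ⟨t, ht⟩ := (mem_powers_iff_mem_zpowers).mpr (hc ⟨y, hy⟩)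
    exact ⟨t, congrArg Subtype.val ht⟩
  obtain ⟨k, hk⟩ : ∃ k : ℕ, orderOf cg = q ^ k := by
    obtain ⟨k, hk⟩ := (IsPGroup.iff_orderOf.mp hpg) c
    exact ⟨k, by rw [hcg, Subgroup.orderOf_coe, hk]⟩
  have hconjmem : g⁻¹ * cg * g ∈ Q := by
    simpa using hQn.conj_mem cg c.2 g⁻¹
  obtain ⟨m, hm⟩ := hmem _ hconjmem
  have hconjn : ∀ t : ℕ, g⁻¹ * cg ^ t * g = cg ^ (m * t) := by
    intro t
    rw [← conj_pow'' g cg t, ← hm, ← pow_mul, mul_comm]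
  have hconjz : ∀ t : ℤ, g⁻¹ * cg ^ t * g = cg ^ ((m : ℤ) * t) := by
    intro t
    rw [← conj_zpow'' g cg t, ← hm, ← zpow_natCast cg m, ← zpow_mul, mul_comm]
  have hma : m ^ a ≡ 1 [MOD q ^ k] := by
    have h1 : (g ^ a)⁻¹ * cg * g ^ a = cg ^ m ^ a := conj_pow_iter hm.symm a
    have h2 : (g ^ a)⁻¹ * cg * g ^ a = cg := by
      rw [mul_assoc, ← hga cg c.2]; group
    rw [h2] at h1
    have h3 : cg ^ m ^ a = cg ^ (1 : ℕ) := by simpa using h1.symm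
    have := pow_eq_pow_iff_modEq.mp h3
    rwa [hk] at this
  by_cases hm1 : m ≡ 1 [MOD q]
  · left
    have hmk : m ≡ 1 [MOD orderOf cg] := by
      rw [hk]; exact units_one_mod_prime hq ha hma hm1
    intro y hy
    obtain ⟨t, ht⟩ := hmem y hy
    rw [← ht, hconjn t]
    exact pow_eq_pow_iff_modEq.mpr (by simpa using hmk.mul_right t)
  · right
    set d : ℤ := (m : ℤ) - 1 with hd
    have hqd : ¬ ((q : ℤ) ∣ d) := by
      intro hdvd
      refine hm1 ((Nat.modEq_iff_dvd).mpr ?_)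
      rw [show ((1:ℕ):ℤ) - (m:ℤ) = -d by rw [hd]; ring]
      exact dvd_neg.mpr hdvd
    have hgcd : Int.gcd (q : ℤ) d = 1 := by
      have hdq : Int.gcd (q : ℤ) d ∣ q :=
        Int.natCast_dvd_natCast.mp (by simpa using Int.gcd_dvd_left (a := (q:ℤ)) (b := d))
      rcases hq.eq_one_or_self_of_dvd _ hdq with h | h
      · exact h
      · exfalso
        apply hqd
        have := Int.gcd_dvd_right (a := (q:ℤ)) (b := d)
        rwa [h] at this
    have hcop : IsCoprime ((q:ℤ) ^ k) d :=
      (Int.isCoprime_iff_gcd_eq_one.mpr hgcd).pow_left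
    obtain ⟨α, β, hαβ⟩ := hcop
    intro y hy
    obtain ⟨t, ht⟩ := hmem y hy
    refine ⟨cg ^ (β * (t : ℤ)), Q.zpow_mem c.2 _, ?_⟩
    rw [hconjz (β * (t : ℤ)), ← zpow_neg, ← zpow_add, ← ht, ← zpow_natCast cg t]
    apply zpow_eq_zpow_iff_modEq.mpr
    have hdvd : (orderOf cg : ℤ) ∣ (t : ℤ) - (-(β * (t:ℤ)) + (m : ℤ) * (β * (t:ℤ))) := by
      refine ⟨α * (t : ℤ), ?_⟩
      rw [hk]
      simp only [hd] at hαβ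
      push_cast
      linear_combination (-(t : ℤ)) * hαβ
    exact (Int.modEq_iff_dvd).mpr hdvd

set_option maxHeartbeats 1000000 in
/-- Part (a): under the hypotheses, `p` does not divide the order of the commutator subgroup. -/
private lemma partA {G : Type*} [Group G] [Finite G]
    {p q : ℕ} (hp : p.Prime) (hq : q.Prime) (hpq : p ≠ q)
    {Q : Sylow q G} (hQ : (Q : Subgroup G).Normal)
    {P : Sylow p G} (hcycP : IsCyclic ↥(P : Subgroup G)) (hcycQ : IsCyclic ↥(Q : Subgroup G))
    {g : G} (hgP : g ∈ (P : Subgroup G)) {y : G} (hyQ : y ∈ (Q : Subgroup G))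
    (hgy : g⁻¹ * y * g ≠ y) :
    ¬ p ∣ Nat.card ↥(commutator G) := by
  haveI : Fact p.Prime := ⟨hp⟩
  haveI : Fact q.Prime := ⟨hq⟩
  -- generator of P
  obtain ⟨c₀, hc₀⟩ := hcycP.exists_generator
  set g₀ : G := (c₀ : G) with hg₀def
  have hg₀P : g₀ ∈ (P : Subgroup G) := c₀.2
  have hPmem : ∀ u ∈ (P : Subgroup G), ∃ t : ℕ, g₀ ^ t = u := by
    intro u hu
    obtain ⟨t, ht⟩ := (mem_powers_iff_mem_zpowers).mpr (hc₀ ⟨u, hu⟩)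
    exact ⟨t, congrArg Subtype.val ht⟩
  obtain ⟨kp, hkp⟩ : ∃ kp, orderOf g₀ = p ^ kp := by
    obtain ⟨kk, hkk⟩ := (IsPGroup.iff_orderOf.mp P.2) c₀
    exact ⟨kk, by rw [hg₀def, Subgroup.orderOf_coe, hkk]⟩
  -- generator of Q and action exponent of g₀ on Q
  obtain ⟨cq, hcq⟩ := hcycQ.exists_generator
  set cQ : G := (cq : G) with hcQdef
  have hcQQ : cQ ∈ (Q : Subgroup G) := cq.2
  have hQmem : ∀ w ∈ (Q : Subgroup G), ∃ t : ℕ, cQ ^ t = w := by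
    intro w hw
    obtain ⟨t, ht⟩ := (mem_powers_iff_mem_zpowers).mpr (hcq ⟨w, hw⟩)
    exact ⟨t, congrArg Subtype.val ht⟩
  obtain ⟨kq, hkq⟩ : ∃ kq, orderOf cQ = q ^ kq := by
    obtain ⟨kk, hkk⟩ := (IsPGroup.iff_orderOf.mp Q.2) cq
    exact ⟨kk, by rw [hcQdef, Subgroup.orderOf_coe, hkk]⟩
  obtain ⟨m₀, hm₀⟩ := hQmem (g₀⁻¹ * cQ * g₀) (by simpa using hQ.conj_mem cQ hcQQ g₀⁻¹)
  have hconjm₀ : ∀ t : ℕ, g₀⁻¹ * cQ ^ t * g₀ = cQ ^ (m₀ * t) := by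
    intro t
    rw [← conj_pow'' g₀ cQ t, ← hm₀, ← pow_mul, mul_comm]
  -- the unit given by m₀ mod q^kq
  have hordg₀pos : orderOf g₀ ≠ 0 := (orderOf_pos g₀).ne'
  have hm₀A : m₀ ^ orderOf g₀ ≡ 1 [MOD q ^ kq] := by
    have h1 : (g₀ ^ orderOf g₀)⁻¹ * cQ * g₀ ^ orderOf g₀ = cQ ^ m₀ ^ orderOf g₀ :=
      conj_pow_iter hm₀.symm (orderOf g₀)
    rw [pow_orderOf_eq_one] at h1
    have h3 : cQ ^ m₀ ^ orderOf g₀ = cQ ^ (1 : ℕ) := by simpa using h1.symm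
    have := pow_eq_pow_iff_modEq.mp h3
    rwa [hkq] at this
  haveI : NeZero (q ^ kq) := ⟨pow_ne_zero kq hq.pos.ne'⟩
  have hm₀Z : ((m₀ : ZMod (q ^ kq))) ^ orderOf g₀ = 1 := by
    have := (ZMod.natCast_eq_natCast_iff _ _ _).mpr hm₀A
    push_cast at this; exact this
  have hu : IsUnit ((m₀ : ZMod (q ^ kq))) := IsUnit.of_pow_eq_one hm₀Z hordg₀pos
  have huA : hu.unit ^ orderOf g₀ = 1 := Units.ext (by push_cast [hu.unit_spec]; exact hm₀Z)
  -- g₀ does not centralize Q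
  have hg₀nt : hu.unit ≠ 1 := by
    intro hu1
    have hm₀1 : m₀ ≡ 1 [MOD q ^ kq] := by
      have h1 : ((m₀ : ZMod (q ^ kq))) = 1 := by
        rw [← hu.unit_spec, hu1, Units.val_one]
      exact (ZMod.natCast_eq_natCast_iff m₀ 1 (q ^ kq)).mp (by simpa using h1)
    have hcen : ∀ w ∈ (Q : Subgroup G), w * g₀ = g₀ * w := by
      intro w hw
      obtain ⟨t, ht⟩ := hQmem w hw
      have : g₀⁻¹ * w * g₀ = w := by
        rw [← ht, hconjm₀ t]
        exact pow_eq_pow_iff_modEq.mpr (by rw [hkq]; simpa using hm₀1.mul_right t)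
      calc w * g₀ = g₀ * (g₀⁻¹ * w * g₀) := by group
      _ = g₀ * w := by rw [this]
    -- then g centralizes y, contradiction
    apply hgy
    have hgcen : g ∈ Subgroup.centralizer ((Q : Subgroup G) : Set G) := by
      obtain ⟨t, ht⟩ := hPmem g hgP
      rw [← ht]
      exact pow_mem (Subgroup.mem_centralizer_iff.mpr hcen) t
    have := Subgroup.mem_centralizer_iff.mp hgcen y hyQ
    rw [mul_assoc, this]; group
  have hpD : p ∣ orderOf hu.unit := by
    have hdvd : orderOf hu.unit ∣ p ^ kp := by
      rw [← hkp]; exact orderOf_dvd_of_pow_eq_one huA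
    obtain ⟨j, hjle, hj⟩ := (Nat.dvd_prime_pow hp).mp hdvd
    rcases Nat.eq_zero_or_pos j with rfl | hjp
    · exact absurd (orderOf_eq_one_iff.mp (by simpa using hj)) hg₀nt
    · rw [hj]; exact dvd_pow_self p hjp.ne'
  -- N(P) ≤ C(P)
  set f := Subgroup.normalizerMonoidHom (P : Subgroup G) with hfdef
  have hker_eq := Subgroup.normalizerMonoidHom_ker (H := (P : Subgroup G))
  have hPcomm : ∀ u ∈ (P : Subgroup G), ∀ v ∈ (P : Subgroup G), u * v = v * u := by
    intro u hu v hv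
    obtain ⟨t1, ht1⟩ := hPmem u hu
    obtain ⟨t2, ht2⟩ := hPmem v hv
    rw [← ht1, ← ht2, pow_mul_comm]
  have hNC : Subgroup.normalizer ((P : Subgroup G) : Set G) ≤ Subgroup.centralizer ((P : Subgroup G) : Set G) := by
    have hfx1 : ∀ x : ↥(Subgroup.normalizer ((P : Subgroup G) : Set G)), f x = 1 := by
      by_contra hnc
      push_neg at hnc
      -- the range of f is nontrivial
      have hcard1 : Nat.card ↥f.range ≠ 1 := by
        intro h1
        obtain ⟨x, hx⟩ := hnc
        have : f x ∈ f.range := ⟨x, rfl⟩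
        rw [Subgroup.card_eq_one.mp h1] at this
        exact hx (Subgroup.mem_bot.mp this)
      set s := (Nat.card ↥f.range).minFac with hsdef
      have hs : s.Prime := Nat.minFac_prime hcard1
      haveI : Fact s.Prime := ⟨hs⟩
      obtain ⟨b, hb⟩ := exists_prime_orderOf_dvd_card' (G := ↥f.range) s (Nat.minFac_dvd _)
      -- p does not divide the card of the range
      have hpnd : ¬ p ∣ Nat.card ↥f.range := by
        intro hpd
        have h1 : f.ker.index = Nat.card ↥f.range := Subgroup.index_ker f
        have h2 : ((P : Subgroup G).subgroupOf (Subgroup.normalizer ((P : Subgroup G) : Set G))) ≤ f.ker := by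
          rw [hker_eq]
          intro x hx
          rw [Subgroup.mem_subgroupOf] at hx ⊢
          exact Subgroup.mem_centralizer_iff.mpr fun h hh => hPcomm h hh _ hx
        have h3 : f.ker.index ∣ ((P : Subgroup G).subgroupOf (Subgroup.normalizer ((P : Subgroup G) : Set G))).index :=
          Subgroup.index_dvd_of_le h2
        have h4 : ((P : Subgroup G).subgroupOf (Subgroup.normalizer ((P : Subgroup G) : Set G))).index ∣
            (P : Subgroup G).index := by
          have := Subgroup.relIndex_mul_index (H := (P : Subgroup G))
            (K := Subgroup.normalizer ((P : Subgroup G) : Set G)) Subgroup.le_normalizer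
          exact Dvd.intro _ this
        rw [← h1] at hpd
        exact P.not_dvd_index ((hpd.trans h3).trans h4)
      have hsdvd : s ∣ Nat.card ↥f.range := Nat.minFac_dvd _
      have hsp : s ≠ p := by
        intro h
        rw [h] at hsdvd
        exact hpnd hsdvd
      -- the element x of the normalizer realizing b
      obtain ⟨x, hxval⟩ := b.2
      set xg : G := (x : G) with hxgdef
      have hxN : xg ∈ Subgroup.normalizer ((P : Subgroup G) : Set G) := x.2
      have hordfx : orderOf (f x) = s := by
        rw [hxval, Subgroup.orderOf_coe, hb]
      -- conjugation exponent of x on g₀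
      have hxinvN : xg⁻¹ ∈ Subgroup.normalizer ((P : Subgroup G) : Set G) := Subgroup.inv_mem _ hxN
      have hconjP : xg⁻¹ * g₀ * xg ∈ (P : Subgroup G) := by
        have := (Subgroup.mem_normalizer_iff.mp hxinvN g₀).mp hg₀P
        simpa using this
      obtain ⟨cex, hcex⟩ := hPmem _ hconjP
      -- action of x on cQ
      have hxQ1 : xg⁻¹ * cQ * xg ∈ (Q : Subgroup G) := by
        simpa using hQ.conj_mem cQ hcQQ xg⁻¹
      have hxQ2 : xg * cQ * xg⁻¹ ∈ (Q : Subgroup G) := hQ.conj_mem cQ hcQQ xg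
      obtain ⟨dq, hdq⟩ := hQmem _ hxQ1
      obtain ⟨dq', hdq'⟩ := hQmem _ hxQ2
      have e3 : cQ ^ (dq * dq') = cQ ^ (1 : ℕ) := by
        calc cQ ^ (dq * dq') = (cQ ^ dq) ^ dq' := pow_mul _ _ _
        _ = (xg⁻¹ * cQ * xg) ^ dq' := by rw [hdq]
        _ = xg⁻¹ * cQ ^ dq' * xg := conj_pow'' xg cQ dq'
        _ = xg⁻¹ * (xg * cQ * xg⁻¹) * xg := by rw [hdq']
        _ = cQ ^ (1 : ℕ) := by group
      have e3' : dq * dq' ≡ 1 [MOD q ^ kq] := by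
        have := pow_eq_pow_iff_modEq.mp e3
        rwa [hkq] at this
      have e12 : cQ ^ (dq * (m₀ * dq')) = cQ ^ (m₀ ^ cex) := by
        calc cQ ^ (dq * (m₀ * dq')) = (cQ ^ dq) ^ (m₀ * dq') := pow_mul _ _ _
        _ = (xg⁻¹ * cQ * xg) ^ (m₀ * dq') := by rw [hdq]
        _ = xg⁻¹ * cQ ^ (m₀ * dq') * xg := conj_pow'' xg cQ _
        _ = xg⁻¹ * (g₀⁻¹ * cQ ^ dq' * g₀) * xg := by rw [hconjm₀ dq']
        _ = xg⁻¹ * (g₀⁻¹ * ((xg * cQ * xg⁻¹)) * g₀) * xg := by rw [hdq']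
        _ = (xg⁻¹ * g₀ * xg)⁻¹ * cQ * (xg⁻¹ * g₀ * xg) := by group
        _ = (g₀ ^ cex)⁻¹ * cQ * g₀ ^ cex := by rw [hcex]
        _ = cQ ^ (m₀ ^ cex) := conj_pow_iter hm₀.symm cex
      have e12' : dq * (m₀ * dq') ≡ m₀ ^ cex [MOD q ^ kq] := by
        have := pow_eq_pow_iff_modEq.mp e12
        rwa [hkq] at this
      have e4 : m₀ ^ cex ≡ m₀ [MOD q ^ kq] := by
        calc m₀ ^ cex ≡ dq * (m₀ * dq') [MOD q ^ kq] := e12'.symm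
        _ = m₀ * (dq * dq') := by ring
        _ ≡ m₀ * 1 [MOD q ^ kq] := Nat.ModEq.mul_left m₀ e3'
        _ = m₀ := mul_one m₀
      have e5 : hu.unit ^ cex = hu.unit := by
        apply Units.ext
        push_cast [hu.unit_spec]
        have := (ZMod.natCast_eq_natCast_iff _ _ _).mpr e4
        push_cast at this
        exact this
      have e6 : cex ≡ 1 [MOD orderOf hu.unit] :=
        pow_eq_pow_iff_modEq.mp (by simpa using e5)
      have h2 : cex ≡ 1 [MOD p] := Nat.ModEq.of_dvd hpD e6
      -- x ^ s centralizes P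
      have hxs : f (x ^ s) = 1 := by
        rw [map_pow, hxval]
        rw [show ((b : MulAut ↥(P : Subgroup G))) ^ s = ((b ^ s : ↥f.range) : MulAut ↥(P : Subgroup G)) from rfl]
        rw [← hb, pow_orderOf_eq_one]
        rfl
      have hxsC : (xg ^ s) ∈ Subgroup.centralizer (((P : Subgroup G)) : Set G) := by
        have hker : x ^ s ∈ f.ker := hxs
        rw [hker_eq, Subgroup.mem_subgroupOf] at hker
        simpa using hker
      have h1 : cex ^ s ≡ 1 [MOD p ^ kp] := by
        have hconj : (xg ^ s)⁻¹ * g₀ * xg ^ s = g₀ ^ cex ^ s := conj_pow_iter hcex.symm s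
        have hcent := Subgroup.mem_centralizer_iff.mp hxsC g₀ hg₀P
        have heq : (xg ^ s)⁻¹ * g₀ * xg ^ s = g₀ := by
          rw [mul_assoc, hcent]; group
        rw [heq] at hconj
        have h3 : g₀ ^ cex ^ s = g₀ ^ (1 : ℕ) := by simpa using hconj.symm
        have := pow_eq_pow_iff_modEq.mp h3
        rwa [hkp] at this
      have hscop : Nat.Coprime s p := (Nat.coprime_primes hs hp).mpr hsp
      have hfin : cex ≡ 1 [MOD p ^ kp] := units_one_mod_prime hp hscop h1 h2
      have hfix : xg⁻¹ * g₀ * xg = g₀ := by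
        rw [← hcex]
        have hmod : cex ≡ 1 [MOD orderOf g₀] := by rw [hkp]; exact hfin
        simpa using pow_eq_pow_iff_modEq.mpr hmod
      -- so x ∈ ker f, contradicting orderOf (f x) = s
      have hxker : x ∈ f.ker := by
        rw [hker_eq, Subgroup.mem_subgroupOf]
        apply Subgroup.mem_centralizer_iff.mpr
        intro h hh
        obtain ⟨t, ht⟩ := hPmem h hh
        have hcomm : Commute g₀ xg := by
          have h5 : xg * (xg⁻¹ * g₀ * xg) = xg * g₀ := by rw [hfix]
          show g₀ * xg = xg * g₀
          calc g₀ * xg = xg * (xg⁻¹ * g₀ * xg) := by group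
          _ = xg * g₀ := h5
        rw [← ht]
        exact (hcomm.pow_left t)
      have : f x = 1 := hxker
      rw [this] at hordfx
      simp only [orderOf_one] at hordfx
      exact hs.one_lt.ne' hordfx.symm
    intro x hx
    have := hfx1 ⟨x, hx⟩
    have hxker : (⟨x, hx⟩ : ↥(Subgroup.normalizer ((P : Subgroup G) : Set G))) ∈ f.ker := this
    rw [hker_eq, Subgroup.mem_subgroupOf] at hxker
    exact hxker
  -- Burnside's normal p-complement theorem
  intro hdvd
  apply MonoidHom.not_dvd_card_ker_transferSylow P hNC
  have hcle : commutator G ≤ (MonoidHom.transferSylow P hNC).ker := by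
    letI : CommGroup ↥(P : Subgroup G) :=
      { (inferInstance : Group ↥(P : Subgroup G)) with
        mul_comm := fun a b => Subtype.ext (hNC (Subgroup.le_normalizer b.2) a a.2) }
    exact Abelianization.commutator_subset_ker _
  exact hdvd.trans (Subgroup.card_dvd_of_le hcle)


/-- Let `G` be a finite C-group, `p ≠ q` primes, `Q` a normal Sylow
`q`-subgroup and `P` a Sylow `p`-subgroup whose conjugation action on `Q` is nontrivial.
Then `p` does not divide `|G'|`, `q` divides `|G'|`, and `Q ≤ G'`, where `G'` is the
commutator subgroup. -/
theorem cgroup_acting_prime_commutator {G : Type*} [Group G] [Finite G]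
    (hC : ∀ (r : ℕ), r.Prime → ∀ P : Sylow r G, IsCyclic ↥P)
    (p q : ℕ) (hp : p.Prime) (hq : q.Prime) (hpq : p ≠ q)
    (Q : Sylow q G) (hQ : (Q : Subgroup G).Normal)
    (P : Sylow p G)
    (hnt : ∃ g ∈ (P : Subgroup G), ∃ y ∈ (Q : Subgroup G), g⁻¹ * y * g ≠ y) :
    ¬ p ∣ Nat.card ↥(commutator G) ∧ q ∣ Nat.card ↥(commutator G) ∧
      (Q : Subgroup G) ≤ commutator G := by
  haveI : Fact p.Prime := ⟨hp⟩
  haveI : Fact q.Prime := ⟨hq⟩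
  obtain ⟨g, hgP, y, hyQ, hgy⟩ := hnt
  -- the order of `g` is coprime to `q`
  have hk0 : ∃ k0, orderOf g = p ^ k0 := by
    obtain ⟨k, hk⟩ := (IsPGroup.iff_orderOf.mp P.2) ⟨g, hgP⟩
    rw [Subgroup.orderOf_mk] at hk
    exact ⟨k, hk⟩
  obtain ⟨k0, hk0⟩ := hk0
  have hcop : Nat.Coprime (orderOf g) q := by
    rw [hk0]
    exact (((Nat.coprime_primes hp hq).mpr hpq)).pow_left _
  have hga : ∀ w ∈ (Q : Subgroup G), g ^ orderOf g * w = w * g ^ orderOf g := by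
    intro w hw
    rw [pow_orderOf_eq_one]
    group
  have hdi := conj_dichotomy hq hQ (hC q hq Q) Q.2 hcop hga
  have hright : ∀ w ∈ (Q : Subgroup G), ∃ z ∈ (Q : Subgroup G), z⁻¹ * (g⁻¹ * z * g) = w := by
    rcases hdi with hl | hr
    · exact absurd (hl y hyQ) hgy
    · exact hr
  have hQle : (Q : Subgroup G) ≤ commutator G := by
    intro w hw
    obtain ⟨z, hz, hzw⟩ := hright w hw
    have hwc : w = ⁅z⁻¹, g⁻¹⁆ := by
      rw [commutatorElement_def, ← hzw]
      group
    rw [hwc, _root_.commutator_def]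
    exact Subgroup.commutator_mem_commutator (Subgroup.mem_top _) (Subgroup.mem_top _)
  refine ⟨partA hp hq hpq hQ (hC p hp P) (hC q hq Q) hgP hyQ hgy, ?_, hQle⟩
  -- q divides the order of the commutator subgroup
  have hy1 : y ≠ 1 := by
    intro h
    apply hgy
    rw [h]
    group
  have hyo : q ∣ orderOf y := by
    obtain ⟨j, hj⟩ := (IsPGroup.iff_orderOf.mp Q.2) ⟨y, hyQ⟩
    rw [Subgroup.orderOf_mk] at hj
    rcases Nat.eq_zero_or_pos j with rfl | hjp
    · exact absurd (orderOf_eq_one_iff.mp (by simpa using hj)) hy1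
    · rw [hj]; exact dvd_pow_self q hjp.ne'
  have h1 : orderOf y ∣ Nat.card ↥(commutator G) := by
    have h2 : orderOf (⟨y, hQle hyQ⟩ : ↥(commutator G)) = orderOf y := Subgroup.orderOf_mk _ _
    rw [← h2]
    exact orderOf_dvd_natCard _
  exact hyo.trans h1
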